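/- arXiv:2512.08756 — 2 statements merged into one kernel-verified Lean document; each statement's English description precedes it below -/
import Mathlib

section
/- Let S_1, ..., S_W be symmetric q×q real matrices and a_1, ..., a_W real numbers with ∑ a_w² > 0. Define S = (∑ a_w²)⁻¹ ∑ a_w S_w with eigendecomposition S = U Λ Uᵀ. Then the minimizer over positive semidefinite matrices Σ of ∑_w ‖S_w − a_w Σ‖_F² is Σ̂ = U Λ⁺ Uᵀ, where Λ⁺ replaces each eigenvalue λ_j by max(λ_j, 0). -/
open Matrix BigOperators

/-- Squared Frobenius norm of a real matrix. -/
def frobSq {m n : ℕ} (A : Matrix (Fin m) (Fin n) ℝ) : ℝ := ∑ i, ∑ j, (A i j) ^ 2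

lemma frobSq_eq_trace {n : ℕ} (A : Matrix (Fin n) (Fin n) ℝ) :
    frobSq A = (Aᵀ * A).trace := by
  simp only [frobSq, Matrix.trace, Matrix.diag, Matrix.mul_apply, Matrix.transpose_apply, sq]
  exact Finset.sum_comm

lemma frob_conj {n : ℕ} (U X : Matrix (Fin n) (Fin n) ℝ) (hU : Uᵀ * U = 1) :
    frobSq (U * X * Uᵀ) = frobSq X := by
  rw [frobSq_eq_trace, frobSq_eq_trace]
  have h1 : (U * X * Uᵀ)ᵀ * (U * X * Uᵀ) = U * (Xᵀ * X) * Uᵀ := by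
    simp only [Matrix.transpose_mul, Matrix.transpose_transpose]
    calc U * (Xᵀ * Uᵀ) * (U * X * Uᵀ)
        = U * (Xᵀ * ((Uᵀ * U) * (X * Uᵀ))) := by
          simp only [Matrix.mul_assoc]
      _ = U * (Xᵀ * (X * Uᵀ)) := by rw [hU, Matrix.one_mul]
      _ = U * (Xᵀ * X) * Uᵀ := by simp only [Matrix.mul_assoc]
  rw [h1, Matrix.trace_mul_comm (U * (Xᵀ * X)) Uᵀ, ← Matrix.mul_assoc, hU,
    Matrix.one_mul]

lemma frobSq_diagonal {n : ℕ} (v : Fin n → ℝ) :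
    frobSq (Matrix.diagonal v) = ∑ j, (v j) ^ 2 := by
  simp only [frobSq, Matrix.diagonal_apply]
  refine Finset.sum_congr rfl fun i _ => ?_
  rw [Finset.sum_eq_single i]
  · simp
  · intro b _ hb; simp [Ne.symm hb]
  · simp

lemma sum_split {n : ℕ} (A : ℝ) (f g h : Fin n → ℝ) :
    ∑ i, (f i - A * g i + A * h i) = (∑ i, f i) - A * ∑ i, g i + A * ∑ i, h i := by
  rw [Finset.sum_add_distrib, Finset.sum_sub_distrib, ← Finset.mul_sum, ← Finset.mul_sum]

lemma scalar_key {W : ℕ} (a : Fin W → ℝ) (hA : (∑ w, (a w) ^ 2) ≠ 0)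
    (s : Fin W → ℝ) (x : ℝ) :
    ∑ w, (s w - a w * x) ^ 2 =
      ∑ w, (s w) ^ 2
        - (∑ w, (a w) ^ 2) * ((∑ w, (a w) ^ 2)⁻¹ * ∑ w, a w * s w) ^ 2
        + (∑ w, (a w) ^ 2) * (x - (∑ w, (a w) ^ 2)⁻¹ * ∑ w, a w * s w) ^ 2 := by
  have h1 : ∑ w, (s w - a w * x) ^ 2
      = ∑ w, (s w) ^ 2 - 2 * x * (∑ w, a w * s w) + x ^ 2 * ∑ w, (a w) ^ 2 := by
    rw [Finset.mul_sum, Finset.mul_sum, ← Finset.sum_sub_distrib, ← Finset.sum_add_distrib]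
    exact Finset.sum_congr rfl fun w _ => by ring
  rw [h1]
  field_simp
  ring

lemma expand_sum {q W : ℕ} (S : Fin W → Matrix (Fin q) (Fin q) ℝ) (a : Fin W → ℝ)
    (hA : (∑ w, (a w) ^ 2) ≠ 0) (Sbar : Matrix (Fin q) (Fin q) ℝ)
    (hSbar : Sbar = (∑ w, (a w) ^ 2)⁻¹ • ∑ w, a w • S w)
    (M : Matrix (Fin q) (Fin q) ℝ) :
    ∑ w, frobSq (S w - a w • M) =
      (∑ w, frobSq (S w)) - (∑ w, (a w) ^ 2) * frobSq Sbar
        + (∑ w, (a w) ^ 2) * frobSq (M - Sbar) := by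
  have hentry : ∀ i j, Sbar i j = (∑ w, (a w) ^ 2)⁻¹ * ∑ w, a w * S w i j := by
    intro i j
    rw [hSbar]
    simp only [Matrix.smul_apply, Matrix.sum_apply, smul_eq_mul]
  have h3 : ∑ i, ∑ j, ∑ w, (S w i j) ^ 2 = ∑ w, frobSq (S w) := by
    simp only [frobSq]
    calc ∑ i, ∑ j, ∑ w, (S w i j) ^ 2
        = ∑ i, ∑ w, ∑ j, (S w i j) ^ 2 :=
          Finset.sum_congr rfl fun i _ => Finset.sum_comm
      _ = ∑ w, ∑ i, ∑ j, (S w i j) ^ 2 := Finset.sum_comm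
  calc ∑ w, frobSq (S w - a w • M)
      = ∑ i, ∑ j, ∑ w, (S w i j - a w * M i j) ^ 2 := by
        simp only [frobSq, Matrix.sub_apply, Matrix.smul_apply, smul_eq_mul]
        rw [Finset.sum_comm]
        exact Finset.sum_congr rfl fun i _ => Finset.sum_comm
    _ = ∑ i, ∑ j, ((∑ w, (S w i j) ^ 2)
          - (∑ w, (a w) ^ 2) * (Sbar i j) ^ 2
          + (∑ w, (a w) ^ 2) * (M i j - Sbar i j) ^ 2) := by
        refine Finset.sum_congr rfl fun i _ => Finset.sum_congr rfl fun j _ => ?_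
        rw [scalar_key a hA (fun w => S w i j) (M i j), hentry i j]
    _ = ∑ i, ((∑ j, ∑ w, (S w i j) ^ 2)
          - (∑ w, (a w) ^ 2) * (∑ j, (Sbar i j) ^ 2)
          + (∑ w, (a w) ^ 2) * ∑ j, (M i j - Sbar i j) ^ 2) :=
        Finset.sum_congr rfl fun i _ => sum_split _ _ _ _
    _ = (∑ i, ∑ j, ∑ w, (S w i j) ^ 2)
          - (∑ w, (a w) ^ 2) * (∑ i, ∑ j, (Sbar i j) ^ 2)
          + (∑ w, (a w) ^ 2) * ∑ i, ∑ j, (M i j - Sbar i j) ^ 2 :=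
        sum_split _ _ _ _
    _ = _ := by
        rw [h3]
        simp only [frobSq, Matrix.sub_apply]

/-- the minimizer over PSD matrices `M` of `∑ w ‖S w − a w • M‖_F²` is
`U Λ⁺ Uᵀ`, obtained by truncating the eigenvalues of
`S̄ = (∑ a_w²)⁻¹ ∑ a_w S_w = U Λ Uᵀ` at zero. -/
theorem stmt0 {q W : ℕ}
    (S : Fin W → Matrix (Fin q) (Fin q) ℝ) (a : Fin W → ℝ)
    (hSymm : ∀ w, (S w).IsSymm)
    (ha : 0 < ∑ w, (a w) ^ 2)
    (Sbar : Matrix (Fin q) (Fin q) ℝ)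
    (hSbar : Sbar = (∑ w, (a w) ^ 2)⁻¹ • ∑ w, a w • S w)
    (U : Matrix (Fin q) (Fin q) ℝ) (d : Fin q → ℝ)
    (hU : Uᵀ * U = 1)
    (hdecomp : Sbar = U * Matrix.diagonal d * Uᵀ) :
    (U * Matrix.diagonal (fun j => max (d j) 0) * Uᵀ).PosSemidef ∧
    ∀ M : Matrix (Fin q) (Fin q) ℝ, M.PosSemidef →
      ∑ w, frobSq (S w - a w • (U * Matrix.diagonal (fun j => max (d j) 0) * Uᵀ)) ≤
        ∑ w, frobSq (S w - a w • M) := by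
  have hA : (∑ w, (a w) ^ 2) ≠ 0 := ne_of_gt ha
  have hUUT : U * Uᵀ = 1 := mul_eq_one_comm.mp hU
  set Shat := U * Matrix.diagonal (fun j => max (d j) 0) * Uᵀ with hShat
  have hpsd : Shat.PosSemidef := by
    have hdiag : (Matrix.diagonal fun j => max (d j) 0).PosSemidef :=
      Matrix.posSemidef_diagonal_iff.mpr fun j => le_max_right _ _
    have h2 := hdiag.mul_mul_conjTranspose_same U
    rw [Matrix.conjTranspose_eq_transpose_of_trivial] at h2
    exact h2
  refine ⟨hpsd, fun M hM => ?_⟩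
  have hSS : Shat - Sbar
      = U * (Matrix.diagonal (fun j => max (d j) 0) - Matrix.diagonal d) * Uᵀ := by
    rw [hShat, hdecomp, Matrix.mul_sub, Matrix.sub_mul]
  have hfrobS : frobSq (Shat - Sbar) = ∑ j, (max (d j) 0 - d j) ^ 2 := by
    rw [hSS, frob_conj U _ hU, Matrix.diagonal_sub, frobSq_diagonal]
  set N := Uᵀ * M * U with hNdef
  have hNpsd : N.PosSemidef := by
    have h2 := hM.mul_mul_conjTranspose_same Uᵀ
    rw [Matrix.conjTranspose_eq_transpose_of_trivial, Matrix.transpose_transpose] at h2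
    exact h2
  have hdiagN : ∀ i, 0 ≤ N i i := by
    intro i
    have h := hNpsd.dotProduct_mulVec_nonneg (Pi.single i 1)
    simpa [Matrix.mulVec, dotProduct, Pi.single_apply, Finset.sum_ite_eq,
      Finset.sum_ite_eq', mul_ite, ite_mul] using h
  have hSbarConj : Uᵀ * Sbar * U = Matrix.diagonal d := by
    rw [hdecomp]
    have h2 : Uᵀ * (U * Matrix.diagonal d * Uᵀ) * U
        = Uᵀ * U * (Matrix.diagonal d * (Uᵀ * U)) := by
      simp only [Matrix.mul_assoc]
    rw [h2, hU, Matrix.one_mul, Matrix.mul_one]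
  have hfrobM : frobSq (M - Sbar) = frobSq (N - Matrix.diagonal d) := by
    have h1 : frobSq (Uᵀ * (M - Sbar) * Uᵀᵀ) = frobSq (M - Sbar) :=
      frob_conj Uᵀ (M - Sbar) (by rwa [Matrix.transpose_transpose])
    rw [Matrix.transpose_transpose] at h1
    rw [← h1, Matrix.mul_sub, Matrix.sub_mul, hSbarConj, hNdef]
  have hineq : frobSq (Shat - Sbar) ≤ frobSq (M - Sbar) := by
    rw [hfrobS, hfrobM]
    calc ∑ j, (max (d j) 0 - d j) ^ 2
        ≤ ∑ i, ((N - Matrix.diagonal d) i i) ^ 2 := by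
          refine Finset.sum_le_sum fun i _ => ?_
          have hNi := hdiagN i
          simp only [Matrix.sub_apply, Matrix.diagonal_apply_eq]
          rcases le_total (d i) 0 with h | h
          · rw [max_eq_right h]; nlinarith
          · rw [max_eq_left h]; simpa using sq_nonneg (N i i - d i)
      _ ≤ ∑ i, ∑ j, ((N - Matrix.diagonal d) i j) ^ 2 :=
          Finset.sum_le_sum fun i _ =>
            Finset.single_le_sum (f := fun j => ((N - Matrix.diagonal d) i j) ^ 2)
              (fun j _ => sq_nonneg _) (Finset.mem_univ i)
      _ = frobSq (N - Matrix.diagonal d) := rfl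
  rw [expand_sum S a hA Sbar hSbar Shat, expand_sum S a hA Sbar hSbar M]
  have h4 := mul_le_mul_of_nonneg_left hineq ha.le
  linarith
end

section
/- In the model Y = ∑_{k=0}^{K} Γ_k with independent Γ_k ∼ MN(0, D_k, Σ_k), the column covariance matrices Σ_0, ..., Σ_K are identifiable from the covariance of vec(Y) if and only if the matrices D_0, ..., D_K are linearly independent. In particular, if K ≥ 1 and all D_k are equal, only the sum ∑_k Σ_k is identifiable. -/
open Matrix Kronecker BigOperators

/-- Identifiability of the column covariance matrices `Σ_0, ..., Σ_K` from the covariance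
`∑_k Σ_k ⊗ D_k` of `vec(Y)`: any two tuples of symmetric matrices producing the same
covariance must coincide. -/
def Identifiable {n q K : ℕ} (D : Fin (K + 1) → Matrix (Fin n) (Fin n) ℝ) : Prop :=
  ∀ Sig Sig' : Fin (K + 1) → Matrix (Fin q) (Fin q) ℝ,
    (∀ k, (Sig k).IsSymm) → (∀ k, (Sig' k).IsSymm) →
    ∑ k, Sig k ⊗ₖ D k = ∑ k, Sig' k ⊗ₖ D k → ∀ k, Sig k = Sig' k

/-- in the model `Y = ∑_k Γ_k` with `Γ_k ∼ MN(0, D_k, Σ_k)`, the column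
covariances are identifiable from `Cov(vec Y) = ∑_k Σ_k ⊗ D_k` if and only if the
`D_k` are linearly independent; in particular, if `K ≥ 1` and all the `D_k` are equal,
the individual `Σ_k` are not identifiable (only their sum is). -/
theorem stmt6 {n q K : ℕ} (hq : 0 < q)
    (D : Fin (K + 1) → Matrix (Fin n) (Fin n) ℝ)
    (hDsymm : ∀ k, (D k).IsSymm) (hDne : ∀ k, D k ≠ 0) :
    (Identifiable (q := q) D ↔ LinearIndependent ℝ D) ∧
    (1 ≤ K → (∀ k k', D k = D k') → ¬ Identifiable (q := q) D) := by
  haveI : NeZero q := ⟨hq.ne'⟩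
  constructor
  · constructor
    · -- Identifiable → LinearIndependent
      intro hid
      rw [Fintype.linearIndependent_iff]
      intro c hc k
      have hsym1 : ∀ j : Fin (K+1), (c j • (1 : Matrix (Fin q) (Fin q) ℝ)).IsSymm := by
        intro j
        exact ((Matrix.isSymm_one).smul (c j))
      have hsym0 : ∀ j : Fin (K+1), ((0 : Matrix (Fin q) (Fin q) ℝ)).IsSymm := fun _ =>
        Matrix.isSymm_zero
      have heq : ∑ j, (c j • (1 : Matrix (Fin q) (Fin q) ℝ)) ⊗ₖ D j
          = ∑ j, (0 : Matrix (Fin q) (Fin q) ℝ) ⊗ₖ D j := by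
        have h1 : ∑ j, (c j • (1 : Matrix (Fin q) (Fin q) ℝ)) ⊗ₖ D j
            = (1 : Matrix (Fin q) (Fin q) ℝ) ⊗ₖ (∑ j, c j • D j) := by
          ext ⟨i, a⟩ ⟨j, b⟩
          simp only [Matrix.sum_apply, Matrix.kroneckerMap_apply, Matrix.smul_apply,
            smul_eq_mul, Finset.mul_sum]
          exact Finset.sum_congr rfl fun m _ => by ring
        rw [h1, hc]
        simp [Matrix.zero_kronecker, Matrix.kronecker_zero]
      have := hid _ _ hsym1 hsym0 heq k
      have h00 := congrFun (congrFun this ⟨0, hq⟩) ⟨0, hq⟩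
      simpa [Matrix.one_apply] using h00
    · -- LinearIndependent → Identifiable
      intro hli Sig Sig' _ _ h k
      ext i j
      have key : ∑ m, (Sig m i j - Sig' m i j) • D m = 0 := by
        ext a b
        have := congrFun (congrFun h (i, a)) (j, b)
        simp only [Matrix.sum_apply, Matrix.kroneckerMap_apply] at this
        simp only [Matrix.sum_apply, Matrix.smul_apply, Matrix.zero_apply,
          smul_eq_mul, sub_mul]
        rw [Finset.sum_sub_distrib]
        rw [this]
        ring
      have := Fintype.linearIndependent_iff.mp hli _ key k
      linarith [sub_eq_zero.mp (by linarith [this] : Sig k i j - Sig' k i j = 0)]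
  · -- not identifiable when all D equal and K ≥ 1
    intro hK hDeq hid
    have h01 : (0 : Fin (K+1)) ≠ 1 := by
      have : (1:ℕ) < K + 1 := by omega
      simp [Fin.ext_iff, Nat.mod_eq_of_lt this]
    set S : Fin (K+1) → Matrix (Fin q) (Fin q) ℝ :=
      fun k => if k = 0 then 1 else 0 with hS
    set S' : Fin (K+1) → Matrix (Fin q) (Fin q) ℝ :=
      fun k => if k = 1 then 1 else 0 with hS'
    have hsymS : ∀ k, (S k).IsSymm := by
      intro k; by_cases hk : k = 0 <;> simp [hS, hk, Matrix.isSymm_one, Matrix.isSymm_zero]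
    have hsymS' : ∀ k, (S' k).IsSymm := by
      intro k; by_cases hk : k = 1 <;> simp [hS', hk, Matrix.isSymm_one, Matrix.isSymm_zero]
    have hsum : ∑ k, S k ⊗ₖ D k = ∑ k, S' k ⊗ₖ D k := by
      have e1 : ∑ k, S k ⊗ₖ D k = (1 : Matrix (Fin q) (Fin q) ℝ) ⊗ₖ D 0 := by
        rw [Finset.sum_eq_single 0]
        · simp [hS]
        · intro b _ hb; simp [hS, hb, Matrix.zero_kronecker]
        · simp
      have e2 : ∑ k, S' k ⊗ₖ D k = (1 : Matrix (Fin q) (Fin q) ℝ) ⊗ₖ D 1 := by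
        rw [Finset.sum_eq_single 1]
        · simp [hS']
        · intro b _ hb; simp [hS', hb, Matrix.zero_kronecker]
        · simp
      rw [e1, e2, hDeq 0 1]
    have := hid S S' hsymS hsymS' hsum 0
    simp only [hS, hS', if_pos rfl, if_neg h01] at this
    have h00 := congrFun (congrFun this ⟨0, hq⟩) ⟨0, hq⟩
    simp [Matrix.one_apply] at h00
end
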